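/- Let N ≥ 2 be an even integer and ν ∈ ℂ with |ν| ≤ N. Define ψ = e^{i(arg ν + arccos(|ν|/N))} for ν ≠ 0 (and ψ = e^{i arccos 0} = i for ν = 0), and for n = 1,…,N set θ_n = ψ if n is even and θ_n = 2ν/N − ψ if n is odd. Then |θ_n| = 1 for all n and Σ_{n=1}^N θ_n = ν. -/

import Mathlib

lemma sum_ite_odd_range (a b : ℂ) (m : ℕ) :
    ∑ n ∈ Finset.range (2 * m), (if Odd n then a else b) = m * (a + b) := by
  induction m with
  | zero => simp
  | succ k ih =>
    have h2 : 2 * (k + 1) = (2 * k + 1) + 1 := by ring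
    rw [h2, Finset.sum_range_succ, Finset.sum_range_succ, ih]
    have h1 : Odd (2 * k + 1) := ⟨k, by ring⟩
    have h0 : ¬ Odd (2 * k) := by simp [Nat.odd_iff]
    simp only [h1, h0, if_true, if_false]
    push_cast
    ring

theorem even_case_unit_decomposition (N : ℕ) (hN : 0 < N) (hEven : Even N)
    (ν : ℂ) (hν : ‖ν‖ ≤ N)
    (ψ : ℂ)
    (hψ : ψ = Complex.exp (Complex.I * ((ν.arg + Real.arccos (‖ν‖ / N) : ℝ) : ℂ)))
    (θ : Fin N → ℂ)
    (hθ : ∀ n : Fin N, θ n = if Odd (n : ℕ) then ψ else 2 * ν / (N : ℂ) - ψ) :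
    (∀ n, ‖θ n‖ = 1) ∧ ∑ n, θ n = ν := by
  have hNR : (0:ℝ) < N := by exact_mod_cast hN
  have hNC : (N:ℂ) ≠ 0 := by exact_mod_cast hNR.ne'
  set α := ν.arg with hα
  set φ := Real.arccos (‖ν‖ / N) with hφ
  have hcos : Real.cos φ = ‖ν‖ / N := by
    apply Real.cos_arccos
    · have : (0:ℝ) ≤ ‖ν‖ / N := div_nonneg (norm_nonneg ν) hNR.le
      linarith
    · rw [div_le_one hNR]; exact hν
  have habs : (‖ν‖ : ℂ) = (N:ℂ) * (Real.cos φ : ℂ) := by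
    rw [hcos]; push_cast; field_simp
  have hνeq : ν = (‖ν‖ : ℂ) * Complex.exp (α * Complex.I) :=
    (Complex.norm_mul_exp_arg_mul_I ν).symm
  have key : 2 * ν / (N : ℂ) - ψ = Complex.exp (((α - φ : ℝ) : ℂ) * Complex.I) := by
    rw [hψ, mul_comm Complex.I]
    conv_lhs => rw [hνeq, habs]
    rw [Complex.exp_mul_I, Complex.exp_mul_I, Complex.exp_mul_I]
    push_cast
    rw [Complex.cos_add, Complex.sin_add, Complex.cos_sub, Complex.sin_sub]
    field_simp
    ring
  constructor
  · intro n
    rw [hθ n]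
    by_cases h : Odd (n : ℕ)
    · rw [if_pos h, hψ, mul_comm Complex.I]
      exact Complex.norm_exp_ofReal_mul_I _
    · rw [if_neg h, key]
      exact Complex.norm_exp_ofReal_mul_I _
  · obtain ⟨m, hm⟩ := hEven
    have hm2 : N = 2 * m := by omega
    have hmC : (m:ℂ) ≠ 0 := by
      have : 0 < m := by omega
      exact_mod_cast this.ne'
    simp_rw [hθ]
    rw [Fin.sum_univ_eq_sum_range (fun n => if Odd n then ψ else 2 * ν / (N : ℂ) - ψ), hm2,
      sum_ite_odd_range]
    push_cast
    field_simp
    ring
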